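/- arXiv:1011.1528 — 2 statements merged into one kernel-verified Lean document; each statement's English description precedes it below -/
import Mathlib

section
/- Let K be a commutative ring with unity and let k, l be nonnegative integers not both equal to zero. Then in K⟨{a,b}⟩ one has λ(a^k b a^l) = (−1)^k C(k+l, k) λ(b a^{k+l}) = (−1)^k C(k+l, k) (b a^{k+l} − a b a^{k+l−1}), where C(k+l, k) is a binomial coefficient. -/
open scoped BigOperators
open Classical

noncomputable section

/-- The free associative algebra `K⟨A⟩` on the alphabet `A`, realized as the monoid algebra
of the free monoid on `A`. -/
abbrev NC (K A : Type*) [CommRing K] : Type _ := MonoidAlgebra K (FreeMonoid A)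

variable (K A : Type*) [CommRing K]

/-- The monomial (word) `w` viewed as an element of `K⟨A⟩`. -/
def wp (w : List A) : NC K A := MonoidAlgebra.single (FreeMonoid.ofList w) 1

/-- The coefficient `(P, w)` of the word `w` in the polynomial `P`. -/
def coeffW (P : NC K A) (w : List A) : K := P.coeff (FreeMonoid.ofList w)

/-- The canonical scalar product `(P, Q) = ∑_w (P, w)(Q, w)` on `K⟨A⟩`. -/
def sp (P Q : NC K A) : K := Finsupp.sum P.coeff fun w c => c * Q.coeff w

attribute [local instance 100] LieRing.ofAssociativeRing

/-- The free Lie algebra `L_K(A)`: the Lie subalgebra of `K⟨A⟩` (with the commutator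
bracket) generated by the letters. -/
def freeLie : LieSubalgebra K (NC K A) :=
  LieSubalgebra.lieSpan K (NC K A) (Set.range fun a : A => wp K A [a])

/-- The adjoint `λ` of the left-normed Lie bracketing, on words:
`λ(ε) = 0`, `λ(a) = a`, `λ(aub) = λ(au)b − λ(ub)a`. -/
def lam : List A → NC K A
  | [] => 0
  | [a] => wp K A [a]
  | a :: b :: t =>
      lam (a :: (b :: t).dropLast) * wp K A [(b :: t).getLast (by simp)] -
        lam (b :: t) * wp K A [a]
  termination_by w => w.length
  decreasing_by
    all_goals simp [List.length_dropLast]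

/-- `λ` extended linearly to the whole of `K⟨A⟩`. -/
def lamLin : NC K A →ₗ[K] NC K A :=
  Finsupp.linearCombination K (fun w : FreeMonoid A => lam K A (FreeMonoid.toList w)) ∘ₗ
    (MonoidAlgebra.coeffLinearEquiv K).toLinearMap

/-- The shuffle product of two words, as an element of `K⟨A⟩`. -/
def shuffleW : List A → List A → NC K A
  | [], v => wp K A v
  | u, [] => wp K A u
  | a :: u, b :: v =>
      wp K A [a] * shuffleW u (b :: v) + wp K A [b] * shuffleW (a :: u) v
  termination_by u v => u.length + v.length
  decreasing_by
    all_goals simp [Nat.lt_succ_iff]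

/-- The shuffle product on `K⟨A⟩`, extended bilinearly. -/
def sh (P Q : NC K A) : NC K A :=
  Finsupp.sum P.coeff fun u cu =>
    Finsupp.sum Q.coeff fun v cv =>
      (cu * cv) • shuffleW K A (FreeMonoid.toList u) (FreeMonoid.toList v)

/-- The right residual `P ▷ q` of `P` by a word `q`: `(P ▷ q, w) = (P, qw)`. -/
def rresW (P : NC K A) (q : List A) : NC K A :=
  Finsupp.sum P.coeff fun u c =>
    if q <+: FreeMonoid.toList u then c • wp K A ((FreeMonoid.toList u).drop q.length) else 0

/-- The right residual `P ▷ Q`: `(P ▷ Q, w) = (P, Qw)`. -/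
def rres (P Q : NC K A) : NC K A :=
  Finsupp.sum Q.coeff fun v c => c • rresW K A P (FreeMonoid.toList v)

/-- Auxiliary left residual by a word `q`: `(q ◁ P, w) = (P, wq)`. -/
def lresW (P : NC K A) (q : List A) : NC K A :=
  Finsupp.sum P.coeff fun u c =>
    if q <:+ FreeMonoid.toList u then
      c • wp K A ((FreeMonoid.toList u).take ((FreeMonoid.toList u).length - q.length))
    else 0

/-- The left residual `Q ◁ P`: `(Q ◁ P, w) = (P, wQ)`. -/
def lres (Q P : NC K A) : NC K A :=
  Finsupp.sum Q.coeff fun v c => c • lresW K A P (FreeMonoid.toList v)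

/-- The number of trailing occurrences of the letter `a` in the word `v`. -/
def trailCount (a : A) (v : FreeMonoid A) : ℕ :=
  ((FreeMonoid.toList v).reverse.takeWhile fun x => decide (x = a)).length

/-- `d(P)`: the least number of trailing `a`'s among the words in the support of `P`. -/
def dP (a : A) (P : NC K A) : ℕ :=
  sInf {n : ℕ | ∃ v ∈ Finsupp.support P.coeff, trailCount A a v = n}

/-- `e(P)`: the largest number of trailing `a`'s among the words in the support of `P`. -/
def eP (a : A) (P : NC K A) : ℕ :=
  Finset.sup (Finsupp.support P.coeff) (trailCount A a)

/-- The polynomial `P_i` in the decomposition `P = ∑ P_i b a^i`: it collects (and strips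
the suffix `b a^i` from) the monomials of `P` with exactly `i` trailing `a`'s. -/
def partBA (a b : A) (i : ℕ) (P : NC K A) : NC K A :=
  Finsupp.sum P.coeff fun v c =>
    if (FreeMonoid.toList v).reverse.take (i + 1) = List.replicate i a ++ [b] then
      c • wp K A ((FreeMonoid.toList v).take ((FreeMonoid.toList v).length - (i + 1)))
    else 0

/-- A word is Lyndon if it is nonempty and strictly smaller, in the lexicographic order,
than each of its proper nonempty right factors. -/
def IsLyndon {A : Type*} [LinearOrder A] (w : List A) : Prop :=
  w ≠ [] ∧ ∀ s t : List A, w = t ++ s → t ≠ [] → s ≠ [] → List.Lex (· < ·) w s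

/-- `γ(w)`: the nonnegative generator of the ideal `{(P, w) : P ∈ L_ℤ(A)}` of `ℤ`. -/
def gammaW (A : Type*) (w : List A) : ℤ :=
  haveI : (Ideal.span {c : ℤ | ∃ P ∈ freeLie ℤ A, coeffW ℤ A P w = c}).IsPrincipal :=
    IsPrincipalIdealRing.principal _
  (Submodule.IsPrincipal.generator
    (Ideal.span {c : ℤ | ∃ P ∈ freeLie ℤ A, coeffW ℤ A P w = c})).natAbs

end

section Aux
variable (K A : Type*) [CommRing K]

lemma wp_mul (u v : List A) : wp K A u * wp K A v = wp K A (u ++ v) := by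
  simp [wp, MonoidAlgebra.single_mul_single]

lemma lam_single (x : A) : lam K A [x] = wp K A [x] := by rw [lam]

lemma lam_cons_cons (x y : A) (t : List A) :
    lam K A (x :: y :: t) =
      lam K A (x :: (y :: t).dropLast) * wp K A [(y :: t).getLast (by simp)] -
        lam K A (y :: t) * wp K A [x] := by
  rw [lam]

lemma lam_concat (x y : A) (w : List A) :
    lam K A (x :: (w ++ [y])) =
      lam K A (x :: w) * wp K A [y] - lam K A (w ++ [y]) * wp K A [x] := by
  cases w with
  | nil => rw [show x :: ([] ++ [y]) = x :: y :: [] by simp, lam_cons_cons]; simp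
  | cons c t =>
      rw [show x :: ((c :: t) ++ [y]) = x :: c :: (t ++ [y]) by simp, lam]
      congr 2
      · congr 1; rw [show c :: (t ++ [y]) = (c :: t) ++ [y] by simp, List.dropLast_concat]
      · congr 1; simp [List.getLast_append]

lemma lam_rep (a : A) (k : ℕ) : lam K A (List.replicate (k + 2) a) = 0 := by
  have h : List.replicate (k + 2) a = a :: (List.replicate k a ++ [a]) := by
    rw [List.replicate_succ, List.replicate_succ']
  rw [h, lam_concat]
  have : a :: List.replicate k a = List.replicate k a ++ [a] := by
    rw [← List.replicate_succ, List.replicate_succ']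
  rw [this, sub_self]

end Aux
lemma rep_concat {A : Type*} (a : A) (m : ℕ) :
    List.replicate m a ++ [a] = List.replicate (m + 1) a :=
  (List.replicate_succ').symm

section Aux2
variable (K A : Type*) [CommRing K]

lemma X_mul (a b : A) (m : ℕ) (hm : 1 ≤ m) :
    (wp K A (b :: List.replicate m a) - wp K A (a :: b :: List.replicate (m - 1) a)) *
        wp K A [a] =
      wp K A (b :: List.replicate (m + 1) a) - wp K A (a :: b :: List.replicate m a) := by
  obtain ⟨m, rfl⟩ := Nat.exists_eq_add_of_le hm
  rw [sub_mul, wp_mul, wp_mul]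
  congr 2
  · simpa using rep_concat a (1 + m)
  · simp [Nat.add_sub_cancel_left, ← rep_concat, Nat.add_comm 1 m]

lemma lam_main (a b : A) :
    ∀ n, ∀ k l : ℕ, k + l = n → 1 ≤ n →
    lam K A (List.replicate k a ++ b :: List.replicate l a) =
      ((-1 : K) ^ k * (Nat.choose (k + l) k : K)) •
        (wp K A (b :: List.replicate (k + l) a) -
          wp K A (a :: b :: List.replicate (k + l - 1) a)) := by
  intro n
  induction n using Nat.strong_induction_on with
  | _ n ih =>
    intro k l hkl hn
    rcases l with _ | q
    · -- l = 0
      rcases k with _ | p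
      · omega
      rcases p with _ | m
      · -- k = 1 : word [a, b]
        show lam K A (a :: ([] ++ [b])) = _
        rw [lam_concat]
        simp only [List.nil_append, lam_single, wp_mul]
        norm_num
      · -- k = m + 2
        have hw : List.replicate (m + 2) a ++ b :: List.replicate 0 a =
            a :: ((List.replicate (m + 1) a) ++ [b]) := by
          simp [List.replicate_succ]
        rw [hw, lam_concat]
        have h1 : a :: List.replicate (m + 1) a = List.replicate (m + 2) a := by
          simp [List.replicate_succ]
        rw [h1, lam_rep, zero_mul, zero_sub]
        have h2 : List.replicate (m + 1) a ++ [b] =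
            List.replicate (m + 1) a ++ b :: List.replicate 0 a := by simp
        rw [h2, ih (m + 1) (by omega) (m + 1) 0 (by omega) (by omega)]
        rw [smul_mul_assoc, X_mul K A a b (m + 1) (by omega) ]
        rw [← neg_smul]
        congr 1
        simp [pow_succ]
    · -- l = q + 1
      rcases k with _ | p
      · -- k = 0
        rcases q with _ | m
        · -- word [b, a]
          show lam K A (b :: ([] ++ [a])) = _
          rw [lam_concat]
          simp only [List.nil_append, lam_single, wp_mul]
          norm_num
        · -- l = m + 2
          have hw : List.replicate 0 a ++ b :: List.replicate (m + 2) a =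
              b :: (List.replicate (m + 1) a ++ [a]) := by
            simp [rep_concat]
          rw [hw, lam_concat, rep_concat, lam_rep, zero_mul, sub_zero]
          have h2 : b :: List.replicate (m + 1) a =
              List.replicate 0 a ++ b :: List.replicate (m + 1) a := by simp
          rw [h2, ih (m + 1) (by omega) 0 (m + 1) (by omega) (by omega)]
          simp only [Nat.zero_add]
          rw [smul_mul_assoc, X_mul K A a b (m + 1) (by omega)]
          norm_num
      · -- k = p + 1, l = q + 1
        have hw : List.replicate (p + 1) a ++ b :: List.replicate (q + 1) a =
            a :: ((List.replicate p a ++ b :: List.replicate q a) ++ [a]) := by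
          rw [List.replicate_succ]
          simp [← rep_concat]
        rw [hw, lam_concat]
        have h1 : a :: (List.replicate p a ++ b :: List.replicate q a) =
            List.replicate (p + 1) a ++ b :: List.replicate q a := by
          simp [List.replicate_succ]
        have h2 : (List.replicate p a ++ b :: List.replicate q a) ++ [a] =
            List.replicate p a ++ b :: List.replicate (q + 1) a := by
          simp [← rep_concat]
        rw [h1, h2, ih (p + q + 1) (by omega) (p + 1) q (by omega) (by omega),
          ih (p + q + 1) (by omega) p (q + 1) (by omega) (by omega)]
        rw [smul_mul_assoc, smul_mul_assoc]
        have e1 : p + 1 + q = p + q + 1 := by omega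
        have e2 : p + (q + 1) = p + q + 1 := by omega
        rw [e1, e2, X_mul K A a b (p + q + 1) (by omega), ← sub_smul]
        have e3 : p + 1 + (q + 1) = p + q + 1 + 1 := by omega
        rw [e3]
        congr 1
        · have hp : Nat.choose (p + q + 1 + 1) (p + 1) =
              Nat.choose (p + q + 1) p + Nat.choose (p + q + 1) (p + 1) := by
            rw [Nat.choose_succ_succ]
          rw [hp]
          push_cast
          ring

end Aux2
theorem lam_pow_b_pow
    (K A : Type*) [CommRing K] (a b : A) (hab : a ≠ b)
    (k l : ℕ) (hkl : ¬(k = 0 ∧ l = 0)) :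
    lam K A (List.replicate k a ++ b :: List.replicate l a) =
      ((-1 : K) ^ k * (Nat.choose (k + l) k : K)) • lam K A (b :: List.replicate (k + l) a) ∧
    lam K A (List.replicate k a ++ b :: List.replicate l a) =
      ((-1 : K) ^ k * (Nat.choose (k + l) k : K)) •
        (wp K A (b :: List.replicate (k + l) a) -
          wp K A (a :: b :: List.replicate (k + l - 1) a)) := by
  have hn : 1 ≤ k + l := by omega
  have h2 := lam_main K A a b (k + l) k l rfl hn
  have h0 := lam_main K A a b (k + l) 0 (k + l) (by omega) hn
  simp only [Nat.zero_add, pow_zero, Nat.choose_zero_right, Nat.cast_one, one_mul, one_smul,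
    List.replicate_zero, List.nil_append] at h0
  exact ⟨by rw [h2, h0], h2⟩
end

section
/- Let a, b be two distinct letters, and let m ≥ 0 and k ≥ 2 be integers. Then γ((b a^2 b a^{2k})^m b) is odd, where γ(w) is the nonnegative generator of the ideal {(P, w) : P ∈ L_ℤ({a,b})} of ℤ. -/
open scoped BigOperators
open Classical

noncomputable section

variable (K A : Type*) [CommRing K]

attribute [local instance 100] LieRing.ofAssociativeRing

end

attribute [local instance 100] LieRing.ofAssociativeRing
-- AUX DEVELOPMENT (to be inserted before `end` / theorem)
noncomputable section Aux

variable {A : Type*}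

open FreeMonoid List

/-- Right-normed Lie bracketing of a word. -/
def rhoB {A : Type*} : List A → NC ℤ A
  | [] => 0
  | [c] => wp ℤ A [c]
  | c :: d :: t => ⁅wp ℤ A [c], rhoB (d :: t)⁆

lemma wp_letter_mem (c : A) : wp ℤ A [c] ∈ freeLie ℤ A :=
  LieSubalgebra.subset_lieSpan ⟨c, rfl⟩

lemma rhoB_mem (c : A) (x : List A) : rhoB (c :: x) ∈ freeLie ℤ A := by
  induction x generalizing c with
  | nil => exact wp_letter_mem c
  | cons d t ih => exact LieSubalgebra.lie_mem _ (wp_letter_mem c) (ih d)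

/-- mod-2 coefficient recursion. -/
def gf {A : Type*} : List A → List A → ZMod 2
  | [], _ => 0
  | [c], w => if w = [c] then 1 else 0
  | c :: d :: t, w =>
      (if w.head? = some c then gf (d :: t) w.tail else 0) +
      (if w.getLast? = some c then gf (d :: t) w.dropLast else 0)

lemma gf_cons (c : A) (x : List A) (hx : x ≠ []) (w : List A) :
    gf (c :: x) w = (if w.head? = some c then gf x w.tail else 0) +
      (if w.getLast? = some c then gf x w.dropLast else 0) := by
  cases x with
  | nil => exact absurd rfl hx
  | cons d t => simp [gf]

lemma gf_step_head (c : A) {x : List A} (hx : x ≠ []) {w : List A}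
    (h1 : w.head? = some c) (h2 : w.getLast? ≠ some c) :
    gf (c :: x) w = gf x w.tail := by
  rw [gf_cons c x hx, if_pos h1, if_neg h2, add_zero]

lemma gf_step_last (c : A) {x : List A} (hx : x ≠ []) {w : List A}
    (h1 : w.head? ≠ some c) (h2 : w.getLast? = some c) :
    gf (c :: x) w = gf x w.dropLast := by
  rw [gf_cons c x hx, if_neg h1, if_pos h2, zero_add]

lemma gf_step_zero (c : A) {x : List A} (hx : x ≠ []) {w : List A}
    (h1 : w.head? ≠ some c) (h2 : w.getLast? ≠ some c) :
    gf (c :: x) w = 0 := by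
  rw [gf_cons c x hx, if_neg h1, if_neg h2, add_zero]

lemma gf_step_both (c : A) {x : List A} (hx : x ≠ []) {w : List A}
    (h1 : w.head? = some c) (h2 : w.getLast? = some c) :
    gf (c :: x) w = gf x w.tail + gf x w.dropLast := by
  rw [gf_cons c x hx, if_pos h1, if_pos h2]

lemma gf_reverse : ∀ (v w : List A), gf v w.reverse = gf v w
  | [], _ => rfl
  | [c], w => by
      simp only [gf]
      have : w.reverse = [c] ↔ w = [c] := by
        constructor
        · intro h; have := congrArg List.reverse h; simpa using this
        · intro h; simp [h]
      simp [this]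
  | c :: d :: t, w => by
      simp only [gf, List.head?_reverse, List.getLast?_reverse, List.tail_reverse,
        List.dropLast_reverse]
      rw [gf_reverse (d :: t) w.dropLast, gf_reverse (d :: t) w.tail, add_comm]

end Aux
section Aux2

variable {A : Type*} {a b : A}

lemma gf_run (hab : a ≠ b) {x : List A} (hx : x ≠ []) (y : List A) :
    ∀ (n p : ℕ), n ≤ p →
      gf (List.replicate n a ++ x) ((b :: y) ++ List.replicate p a)
        = gf x ((b :: y) ++ List.replicate (p - n) a)
  | 0, p, _ => by simp
  | n + 1, p, h => by
      obtain ⟨q, rfl⟩ : ∃ q, p = q + 1 := ⟨p - 1, by omega⟩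
      rw [List.replicate_succ, List.cons_append]
      have hxx : List.replicate n a ++ x ≠ [] := by simp [hx]
      have hw : (b :: y) ++ List.replicate (q + 1) a
          = ((b :: y) ++ List.replicate q a) ++ [a] := by
        rw [List.replicate_succ' (n := q) (a := a), List.append_assoc]
      rw [gf_step_last a hxx (by simp [Ne.symm hab])
        (by rw [hw]; exact List.getLast?_concat)]
      rw [hw, List.dropLast_concat]
      rw [show q + 1 - (n + 1) = q - n from by omega]
      exact gf_run hab hx y n q (by omega)

end Aux2
section Aux3

variable {A : Type*} {a b : A}

lemma some_ne_some {c d : A} (h : c ≠ d) : (some c : Option A) ≠ some d := by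
  simpa using h

/-- Killing step: a word starting and ending with `b` is annihilated by an `a`-step. -/
lemma gf_kill (hab : a ≠ b) {x : List A} (hx : x ≠ []) (l : List A) :
    gf (a :: x) ((b :: l) ++ [b]) = 0 := by
  apply gf_step_zero a hx
  · simp [Ne.symm hab]
  · rw [List.getLast?_concat]; exact some_ne_some (Ne.symm hab)

lemma chunkA0 (hab : a ≠ b) (K : ℕ) {x : List A} (hx : x ≠ []) :
    gf (b :: (List.replicate (2*K+3) a ++ (b :: a :: a :: a :: x)))
       (b :: a :: a :: b :: (List.replicate (2*K+4) a ++ [b]))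
      = gf x [b] := by
  have hρ : List.replicate (2*K+4) a ≠ [] := by simp
  have hp1 : List.replicate (2*K+3) a ++ (b :: a :: a :: a :: x) ≠ [] := by simp
  have step1 : gf (b :: (List.replicate (2*K+3) a ++ (b :: a :: a :: a :: x))) (b :: a :: a :: b :: (List.replicate (2*K+4) a ++ [b])) = gf (List.replicate (2*K+3) a ++ (b :: a :: a :: a :: x)) (a :: a :: b :: (List.replicate (2*K+4) a ++ [b])) + gf (List.replicate (2*K+3) a ++ (b :: a :: a :: a :: x)) ((b :: a :: a :: b :: []) ++ List.replicate (2*K+4) a) := by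
        rw [gf_step_both b (w := b :: a :: a :: b :: (List.replicate (2*K+4) a ++ [b])) hp1
          rfl
          (by rw [show b :: a :: a :: b :: (List.replicate (2*K+4) a ++ [b])
                = (b :: a :: a :: b :: List.replicate (2*K+4) a) ++ [b] by simp];
              exact List.getLast?_concat)]
        congr 1
        rw [show b :: a :: a :: b :: (List.replicate (2*K+4) a ++ [b])
              = (b :: a :: a :: b :: List.replicate (2*K+4) a) ++ [b] by simp,
          List.dropLast_concat]
        simp
  have hX : gf (List.replicate (2*K+3) a ++ (b :: a :: a :: a :: x)) (a :: a :: b :: (List.replicate (2*K+4) a ++ [b])) = 0 := by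
        -- X-term dies
          rw [show List.replicate (2*K+3) a = a :: a :: List.replicate (2*K+1) a from rfl,
            List.cons_append, List.cons_append]
          rw [gf_step_head a (w := a :: a :: b :: (List.replicate (2*K+4) a ++ [b]))
            (by simp) rfl
            (by rw [show a :: a :: b :: (List.replicate (2*K+4) a ++ [b])
                  = (a :: a :: b :: List.replicate (2*K+4) a) ++ [b] by simp,
                List.getLast?_concat]; exact some_ne_some (Ne.symm hab))]
          rw [show (a :: a :: b :: (List.replicate (2*K+4) a ++ [b])).tail
              = a :: b :: (List.replicate (2*K+4) a ++ [b]) from rfl]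
          rw [gf_step_head a (w := a :: b :: (List.replicate (2*K+4) a ++ [b]))
            (by simp) rfl
            (by rw [show a :: b :: (List.replicate (2*K+4) a ++ [b])
                  = (a :: b :: List.replicate (2*K+4) a) ++ [b] by simp,
                List.getLast?_concat]; exact some_ne_some (Ne.symm hab))]
          rw [show (a :: b :: (List.replicate (2*K+4) a ++ [b])).tail
              = (b :: List.replicate (2*K+4) a) ++ [b] from rfl]
          rw [show List.replicate (2*K+1) a = a :: List.replicate (2*K) a from rfl,
            List.cons_append]
          exact gf_kill hab (by simp) _
  have hY : gf (List.replicate (2*K+3) a ++ (b :: a :: a :: a :: x)) ((b :: a :: a :: b :: []) ++ List.replicate (2*K+4) a) = gf (b :: a :: a :: a :: x) ((b :: a :: a :: b :: []) ++ List.replicate 1 a) := by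
        rw [gf_run hab (x := b :: a :: a :: a :: x) (by simp) _ (2*K+3) (2*K+4) (by omega),
          show (2*K+4) - (2*K+3) = 1 from by omega]
  rw [step1, hX, hY, zero_add]
  rw [show ((b :: a :: a :: b :: []) ++ List.replicate 1 a : List A)
      = b :: (a :: a :: b :: a :: []) from by simp]
  rw [gf_step_head b (w := b :: (a :: a :: b :: a :: [])) (by simp) rfl
    (by rw [show b :: (a :: a :: b :: a :: [] : List A)
          = (b :: a :: a :: b :: []) ++ [a] by simp, List.getLast?_concat];
        exact some_ne_some hab)]
  rw [show (b :: (a :: a :: b :: a :: [] : List A)).tail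
      = a :: a :: b :: a :: [] from rfl]
  rw [gf_step_both a (w := a :: a :: b :: a :: []) (by simp) rfl
    (by rw [show (a :: a :: b :: a :: [] : List A) = (a :: a :: b :: []) ++ [a] by simp,
        List.getLast?_concat])]
  rw [show (a :: a :: b :: a :: [] : List A).tail = a :: b :: a :: [] from rfl,
    show (a :: a :: b :: a :: [] : List A).dropLast = a :: a :: b :: [] from by simp]
  rw [gf_step_both a (w := a :: b :: a :: []) (by simp) rfl
    (by rw [show (a :: b :: a :: [] : List A) = (a :: b :: []) ++ [a] by simp,
        List.getLast?_concat])]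
  rw [gf_step_head a (w := a :: a :: b :: []) (by simp) rfl
    (by simpa using some_ne_some (Ne.symm hab))]
  rw [show (a :: b :: a :: [] : List A).tail = b :: a :: [] from rfl,
    show (a :: b :: a :: [] : List A).dropLast = a :: b :: [] from by simp,
    show (a :: a :: b :: [] : List A).tail = a :: b :: [] from rfl]
  rw [add_assoc, CharTwo.add_self_eq_zero, add_zero]
  rw [gf_step_last a (w := b :: a :: []) hx
    (by simpa using some_ne_some (Ne.symm hab))
    (by rw [show (b :: a :: [] : List A) = (b :: []) ++ [a] by simp,
        List.getLast?_concat])]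
  rw [show (b :: a :: [] : List A).dropLast = [b] from by simp]

end Aux3
section Aux4

variable {A : Type*} {a b : A}

lemma chunkA (hab : a ≠ b) (K : ℕ) {x : List A} (hx : x ≠ []) {C : List A}
    (hC : C.getLast? = some b) :
    gf (b :: (List.replicate (2*K+3) a ++ (b :: a :: a :: a :: x)))
       (b :: a :: a :: b ::
         (List.replicate (2*K+4) a ++ (C ++ (List.replicate (2*K+4) a ++ [b]))))
      = gf x (b :: (List.replicate (2*K+4) a ++ C)) := by
  have hCne : C ≠ [] := by rintro rfl; simp at hC
  have hp1 : List.replicate (2*K+3) a ++ (b :: a :: a :: a :: x) ≠ [] := by simp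
  have step1 : gf (b :: (List.replicate (2*K+3) a ++ (b :: a :: a :: a :: x)))
      (b :: a :: a :: b ::
        (List.replicate (2*K+4) a ++ (C ++ (List.replicate (2*K+4) a ++ [b]))))
      = gf (List.replicate (2*K+3) a ++ (b :: a :: a :: a :: x))
          (a :: a :: b :: (List.replicate (2*K+4) a ++ (C ++ (List.replicate (2*K+4) a ++ [b]))))
        + gf (List.replicate (2*K+3) a ++ (b :: a :: a :: a :: x))
          ((b :: (a :: a :: b :: (List.replicate (2*K+4) a ++ C))) ++ List.replicate (2*K+4) a) := by
    rw [gf_step_both b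
      (w := b :: a :: a :: b ::
        (List.replicate (2*K+4) a ++ (C ++ (List.replicate (2*K+4) a ++ [b])))) hp1
      rfl
      (by rw [show b :: a :: a :: b ::
            (List.replicate (2*K+4) a ++ (C ++ (List.replicate (2*K+4) a ++ [b])))
            = (b :: a :: a :: b :: (List.replicate (2*K+4) a ++ (C ++ List.replicate (2*K+4) a)))
              ++ [b] by simp];
          exact List.getLast?_concat)]
    congr 1
    rw [show b :: a :: a :: b ::
          (List.replicate (2*K+4) a ++ (C ++ (List.replicate (2*K+4) a ++ [b])))
          = (b :: a :: a :: b :: (List.replicate (2*K+4) a ++ (C ++ List.replicate (2*K+4) a)))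
            ++ [b] by simp,
      List.dropLast_concat]
    simp
  have hX : gf (List.replicate (2*K+3) a ++ (b :: a :: a :: a :: x))
      (a :: a :: b :: (List.replicate (2*K+4) a ++ (C ++ (List.replicate (2*K+4) a ++ [b]))))
      = 0 := by
    rw [show List.replicate (2*K+3) a = a :: a :: List.replicate (2*K+1) a from rfl,
      List.cons_append, List.cons_append]
    rw [gf_step_head a
      (w := a :: a :: b :: (List.replicate (2*K+4) a ++ (C ++ (List.replicate (2*K+4) a ++ [b]))))
      (by simp) rfl
      (by rw [show a :: a :: b :: (List.replicate (2*K+4) a ++ (C ++ (List.replicate (2*K+4) a ++ [b])))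
            = (a :: a :: b :: (List.replicate (2*K+4) a ++ (C ++ List.replicate (2*K+4) a))) ++ [b]
            by simp,
          List.getLast?_concat]; exact some_ne_some (Ne.symm hab))]
    rw [show (a :: a :: b :: (List.replicate (2*K+4) a ++ (C ++ (List.replicate (2*K+4) a ++ [b])))).tail
        = a :: b :: (List.replicate (2*K+4) a ++ (C ++ (List.replicate (2*K+4) a ++ [b]))) from rfl]
    rw [gf_step_head a
      (w := a :: b :: (List.replicate (2*K+4) a ++ (C ++ (List.replicate (2*K+4) a ++ [b]))))
      (by simp) rfl
      (by rw [show a :: b :: (List.replicate (2*K+4) a ++ (C ++ (List.replicate (2*K+4) a ++ [b])))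
            = (a :: b :: (List.replicate (2*K+4) a ++ (C ++ List.replicate (2*K+4) a))) ++ [b]
            by simp,
          List.getLast?_concat]; exact some_ne_some (Ne.symm hab))]
    rw [show (a :: b :: (List.replicate (2*K+4) a ++ (C ++ (List.replicate (2*K+4) a ++ [b])))).tail
        = b :: (List.replicate (2*K+4) a ++ (C ++ (List.replicate (2*K+4) a ++ [b]))) from rfl]
    rw [show List.replicate (2*K+1) a = a :: List.replicate (2*K) a from rfl,
      List.cons_append]
    rw [show b :: (List.replicate (2*K+4) a ++ (C ++ (List.replicate (2*K+4) a ++ [b])))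
        = (b :: (List.replicate (2*K+4) a ++ (C ++ List.replicate (2*K+4) a))) ++ [b] by simp]
    exact gf_kill hab (by simp) _
  have hY : gf (List.replicate (2*K+3) a ++ (b :: a :: a :: a :: x))
      ((b :: (a :: a :: b :: (List.replicate (2*K+4) a ++ C))) ++ List.replicate (2*K+4) a)
      = gf (b :: a :: a :: a :: x)
          ((b :: (a :: a :: b :: (List.replicate (2*K+4) a ++ C))) ++ List.replicate 1 a) := by
    rw [gf_run hab (x := b :: a :: a :: a :: x) (by simp) _ (2*K+3) (2*K+4) (by omega),
      show (2*K+4) - (2*K+3) = 1 from by omega]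
  rw [step1, hX, hY, zero_add]
  rw [show ((b :: (a :: a :: b :: (List.replicate (2*K+4) a ++ C))) ++ List.replicate 1 a : List A)
      = b :: a :: a :: b :: (List.replicate (2*K+4) a ++ (C ++ [a])) from by simp]
  rw [gf_step_head b
    (w := b :: a :: a :: b :: (List.replicate (2*K+4) a ++ (C ++ [a]))) (by simp) rfl
    (by rw [show b :: a :: a :: b :: (List.replicate (2*K+4) a ++ (C ++ [a]))
          = (b :: a :: a :: b :: (List.replicate (2*K+4) a ++ C)) ++ [a] by simp,
        List.getLast?_concat]; exact some_ne_some hab)]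
  rw [show (b :: a :: a :: b :: (List.replicate (2*K+4) a ++ (C ++ [a]))).tail
      = a :: a :: b :: (List.replicate (2*K+4) a ++ (C ++ [a])) from rfl]
  rw [gf_step_both a
    (w := a :: a :: b :: (List.replicate (2*K+4) a ++ (C ++ [a]))) (by simp) rfl
    (by rw [show a :: a :: b :: (List.replicate (2*K+4) a ++ (C ++ [a]))
          = (a :: a :: b :: (List.replicate (2*K+4) a ++ C)) ++ [a] by simp,
        List.getLast?_concat])]
  rw [show (a :: a :: b :: (List.replicate (2*K+4) a ++ (C ++ [a]))).tail
      = a :: b :: (List.replicate (2*K+4) a ++ (C ++ [a])) from rfl,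
    show (a :: a :: b :: (List.replicate (2*K+4) a ++ (C ++ [a]))).dropLast
      = a :: a :: b :: (List.replicate (2*K+4) a ++ C) from by
        rw [show a :: a :: b :: (List.replicate (2*K+4) a ++ (C ++ [a]))
            = (a :: a :: b :: (List.replicate (2*K+4) a ++ C)) ++ [a] by simp,
          List.dropLast_concat]]
  rw [gf_step_both a
    (w := a :: b :: (List.replicate (2*K+4) a ++ (C ++ [a]))) (by simp) rfl
    (by rw [show a :: b :: (List.replicate (2*K+4) a ++ (C ++ [a]))
          = (a :: b :: (List.replicate (2*K+4) a ++ C)) ++ [a] by simp,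
        List.getLast?_concat])]
  rw [gf_step_head a
    (w := a :: a :: b :: (List.replicate (2*K+4) a ++ C)) (by simp) rfl
    (by rw [show a :: a :: b :: (List.replicate (2*K+4) a ++ C)
          = (a :: a :: b :: List.replicate (2*K+4) a) ++ C by simp,
        List.getLast?_append, hC]; simp [Ne.symm hab])]
  rw [show (a :: b :: (List.replicate (2*K+4) a ++ (C ++ [a]))).tail
      = b :: (List.replicate (2*K+4) a ++ (C ++ [a])) from rfl,
    show (a :: b :: (List.replicate (2*K+4) a ++ (C ++ [a]))).dropLast
      = a :: b :: (List.replicate (2*K+4) a ++ C) from by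
        rw [show a :: b :: (List.replicate (2*K+4) a ++ (C ++ [a]))
            = (a :: b :: (List.replicate (2*K+4) a ++ C)) ++ [a] by simp,
          List.dropLast_concat],
    show (a :: a :: b :: (List.replicate (2*K+4) a ++ C)).tail
      = a :: b :: (List.replicate (2*K+4) a ++ C) from rfl]
  rw [add_assoc, CharTwo.add_self_eq_zero, add_zero]
  rw [gf_step_last a (w := b :: (List.replicate (2*K+4) a ++ (C ++ [a]))) hx
    (by simpa using some_ne_some (Ne.symm hab))
    (by rw [show b :: (List.replicate (2*K+4) a ++ (C ++ [a]))
          = (b :: (List.replicate (2*K+4) a ++ C)) ++ [a] by simp,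
        List.getLast?_concat])]
  rw [show (b :: (List.replicate (2*K+4) a ++ (C ++ [a]))).dropLast
      = b :: (List.replicate (2*K+4) a ++ C) from by
        rw [show b :: (List.replicate (2*K+4) a ++ (C ++ [a]))
            = (b :: (List.replicate (2*K+4) a ++ C)) ++ [a] by simp,
          List.dropLast_concat]]

end Aux4
section Aux5

variable {A : Type*}

/-- One block of the word `w`. -/
def blkL (a b : A) (K : ℕ) : List A := b :: a :: a :: b :: List.replicate (2*K+4) a

/-- One block of the dual word `v`. -/
def chunkL (a b : A) (K : ℕ) : List A := b :: (List.replicate (2*K+3) a ++ [b, a, a, a])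

variable {a b : A}

lemma Qshape (a b : A) (K : ℕ) : ∀ m : ℕ, ∃ C : List A,
    C.getLast? = some b ∧ C.reverse = C ∧
    (List.replicate (m+1) (blkL a b K)).flatten ++ [b]
      = C ++ (List.replicate (2*K+4) a ++ [b]) ∧
    blkL a b K ++ C = C ++ (List.replicate (2*K+4) a ++ (b :: a :: a :: b :: []))
  | 0 => by
      refine ⟨b :: a :: a :: b :: [], by simp, by simp, ?_, ?_⟩
      · simp [blkL]
      · simp [blkL]
  | m + 1 => by
      obtain ⟨C, hC1, hC2, hC3, hC4⟩ := Qshape a b K m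
      refine ⟨blkL a b K ++ C, ?_, ?_, ?_, ?_⟩
      · simp [List.getLast?_append, hC1]
      · rw [List.reverse_append, hC2]
        rw [show (blkL a b K).reverse
            = List.replicate (2*K+4) a ++ (b :: a :: a :: b :: []) from by
          simp [blkL]]
        exact hC4.symm
      · rw [show (m + 1 + 1) = (m + 1) + 1 from rfl, List.replicate_succ,
          List.flatten_cons, List.append_assoc, hC3, List.append_assoc]
      · rw [List.append_assoc, hC4, ← List.append_assoc, ← List.append_assoc]

lemma Pmain (hab : a ≠ b) (K : ℕ) : ∀ m : ℕ,
    gf ((List.replicate m (chunkL a b K)).flatten ++ [b])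
       ((List.replicate m (blkL a b K)).flatten ++ [b]) = 1
  | 0 => by simp [gf]
  | m + 1 => by
      have hprog : (List.replicate (m+1) (chunkL a b K)).flatten ++ [b]
          = b :: (List.replicate (2*K+3) a
              ++ (b :: a :: a :: a :: ((List.replicate m (chunkL a b K)).flatten ++ [b]))) := by
        rw [List.replicate_succ, List.flatten_cons]
        simp [chunkL]
      have hxne : (List.replicate m (chunkL a b K)).flatten ++ [b] ≠ [] := by simp
      rw [hprog]
      cases m with
      | zero =>
          have hw : (List.replicate 1 (blkL a b K)).flatten ++ [b]
              = b :: a :: a :: b :: (List.replicate (2*K+4) a ++ [b]) := by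
            simp [blkL]
          rw [hw, chunkA0 hab K hxne]
          simp [gf]
      | succ j =>
          obtain ⟨C, hC1, hC2, hC3, hC4⟩ := Qshape a b K j
          have hw : (List.replicate (j+1+1) (blkL a b K)).flatten ++ [b]
              = b :: a :: a :: b ::
                  (List.replicate (2*K+4) a ++ (C ++ (List.replicate (2*K+4) a ++ [b]))) := by
            rw [List.replicate_succ, List.flatten_cons, List.append_assoc, hC3]
            simp [blkL]
          rw [hw, chunkA hab K hxne hC1]
          have hrev : b :: (List.replicate (2*K+4) a ++ C)
              = ((List.replicate (j+1) (blkL a b K)).flatten ++ [b]).reverse := by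
            rw [hC3, List.reverse_append, List.reverse_append, hC2]
            simp
          rw [hrev, gf_reverse]
          exact Pmain hab K (j+1)

end Aux5
section Aux6

variable {A : Type*}

lemma coeff_wp (v w : List A) : coeffW ℤ A (wp ℤ A v) w = if w = v then 1 else 0 := by
  simp only [coeffW, wp, MonoidAlgebra.coeff_single, Finsupp.single_apply,
    EmbeddingLike.apply_eq_iff_eq]
  simp [eq_comm]

lemma coeff_letter_mul (c : A) (P : NC ℤ A) (w : List A) :
    (wp ℤ A [c] * P).coeff (FreeMonoid.ofList w)
      = if w.head? = some c then P.coeff (FreeMonoid.ofList w.tail) else 0 := by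
  cases w with
  | nil =>
      rw [if_neg (by simp)]
      rw [show wp ℤ A [c] = MonoidAlgebra.single (FreeMonoid.ofList [c]) (1:ℤ) from rfl]
      apply MonoidAlgebra.single_mul_apply_of_not_exists_mul
      rintro ⟨d, hd⟩
      have := congrArg FreeMonoid.toList hd
      simp only [FreeMonoid.toList_mul, FreeMonoid.toList_ofList] at this
      exact absurd this (by simp)
  | cons e t =>
      by_cases hec : e = c
      · subst hec
        rw [if_pos (show (e :: t).head? = some e from rfl)]
        have H : ∀ d : FreeMonoid A,
            FreeMonoid.ofList [e] * d = FreeMonoid.ofList (e :: t) ↔ d = FreeMonoid.ofList t := by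
          intro d
          constructor
          · intro h
            have h2 := congrArg FreeMonoid.toList h
            simp only [FreeMonoid.toList_mul, FreeMonoid.toList_ofList, List.singleton_append,
              List.cons.injEq, true_and] at h2
            rw [← FreeMonoid.ofList_toList d, h2]
          · rintro rfl
            exact (FreeMonoid.ofList_append _ _).symm
        rw [show wp ℤ A [e] = MonoidAlgebra.single (FreeMonoid.ofList [e]) (1:ℤ) from rfl,
          MonoidAlgebra.coeff_single_mul_eq_mul_coeff _ (fun d _ => H d), one_mul]
        rfl
      · rw [if_neg (by simp [hec])]
        rw [show wp ℤ A [c] = MonoidAlgebra.single (FreeMonoid.ofList [c]) (1:ℤ) from rfl]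
        apply MonoidAlgebra.single_mul_apply_of_not_exists_mul
        rintro ⟨d, hd⟩
        have := congrArg FreeMonoid.toList hd
        simp only [FreeMonoid.toList_mul, FreeMonoid.toList_ofList, List.singleton_append,
          List.cons.injEq] at this
        exact hec this.1

lemma coeff_mul_letter (c : A) (P : NC ℤ A) (w : List A) :
    (P * wp ℤ A [c]).coeff (FreeMonoid.ofList w)
      = if w.getLast? = some c then P.coeff (FreeMonoid.ofList w.dropLast) else 0 := by
  by_cases hlast : w.getLast? = some c
  · rw [if_pos hlast]
    have hw : w.dropLast ++ [c] = w := List.dropLast_append_getLast? c hlast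
    have H : ∀ d : FreeMonoid A,
        d * FreeMonoid.ofList [c] = FreeMonoid.ofList w ↔ d = FreeMonoid.ofList w.dropLast := by
      intro d
      constructor
      · intro h
        have h2 := congrArg FreeMonoid.toList h
        simp only [FreeMonoid.toList_mul, FreeMonoid.toList_ofList] at h2
        rw [← hw] at h2
        have h3 := List.append_cancel_right (bs := [c]) h2
        rw [← FreeMonoid.ofList_toList d, h3]
      · rintro rfl
        rw [← FreeMonoid.ofList_append, hw]
    rw [show wp ℤ A [c] = MonoidAlgebra.single (FreeMonoid.ofList [c]) (1:ℤ) from rfl,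
      MonoidAlgebra.coeff_mul_single_eq_coeff_mul _ (fun d _ => H d), mul_one]
  · rw [if_neg hlast]
    rw [show wp ℤ A [c] = MonoidAlgebra.single (FreeMonoid.ofList [c]) (1:ℤ) from rfl]
    apply MonoidAlgebra.mul_single_apply_of_not_exists_mul
    rintro ⟨d, hd⟩
    have := congrArg FreeMonoid.toList hd
    simp only [FreeMonoid.toList_mul, FreeMonoid.toList_ofList] at this
    apply hlast
    rw [this, List.getLast?_concat]

lemma coeff_rho : ∀ (v : List A), v ≠ [] → ∀ (w : List A),
    ((coeffW ℤ A (rhoB v) w : ℤ) : ZMod 2) = gf v w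
  | [], h, _ => absurd rfl h
  | [c], _, w => by
      rw [show rhoB [c] = wp ℤ A [c] from rfl, coeff_wp]
      simp only [gf, apply_ite (fun z : ℤ => (z : ZMod 2)), Int.cast_one, Int.cast_zero]
  | c :: d :: t, _, w => by
      have hlie : rhoB (c :: d :: t)
          = wp ℤ A [c] * rhoB (d :: t) - rhoB (d :: t) * wp ℤ A [c] := by
        rw [show rhoB (c :: d :: t) = ⁅wp ℤ A [c], rhoB (d :: t)⁆ from rfl, Ring.lie_def]
      have happ : coeffW ℤ A (rhoB (c :: d :: t)) w
          = (wp ℤ A [c] * rhoB (d :: t)).coeff (FreeMonoid.ofList w)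
            - (rhoB (d :: t) * wp ℤ A [c]).coeff (FreeMonoid.ofList w) := by
        rw [coeffW, hlie, MonoidAlgebra.coeff_sub, Finsupp.sub_apply]
      rw [happ, coeff_letter_mul, coeff_mul_letter]
      rw [Int.cast_sub, sub_eq_add_neg, CharTwo.neg_eq]
      rw [gf_cons c (d :: t) (by simp) w]
      congr 1
      · rw [apply_ite (fun z : ℤ => (z : ZMod 2)), Int.cast_zero]
        rw [show ((rhoB (d :: t)).coeff (FreeMonoid.ofList w.tail) : ℤ)
            = coeffW ℤ A (rhoB (d :: t)) w.tail from rfl]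
        rw [coeff_rho (d :: t) (by simp) w.tail]
      · rw [apply_ite (fun z : ℤ => (z : ZMod 2)), Int.cast_zero]
        rw [show ((rhoB (d :: t)).coeff (FreeMonoid.ofList w.dropLast) : ℤ)
            = coeffW ℤ A (rhoB (d :: t)) w.dropLast from rfl]
        rw [coeff_rho (d :: t) (by simp) w.dropLast]

lemma rhoB_mem' : ∀ (v : List A), v ≠ [] → rhoB v ∈ freeLie ℤ A
  | [], h => absurd rfl h
  | c :: x, _ => rhoB_mem c x

end Aux6
theorem gamma_ba2ba2k_pow_b_odd
    (A : Type*) (a b : A) (hab : a ≠ b) (m k : ℕ) (hk : 2 ≤ k) :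
    Odd (gammaW A
      ((List.replicate m (b :: a :: a :: b :: List.replicate (2 * k) a)).flatten ++ [b])) := by
  obtain ⟨K, rfl⟩ : ∃ K, k = K + 2 := ⟨k - 2, by omega⟩
  rw [show 2 * (K + 2) = 2 * K + 4 from by ring]
  set W : List A := (List.replicate m (b :: a :: a :: b :: List.replicate (2 * K + 4) a)).flatten
      ++ [b] with hW
  set v : List A := (List.replicate m (chunkL a b K)).flatten ++ [b] with hv
  have hvne : v ≠ [] := by simp [hv]
  have hgf : gf v W = 1 := by
    rw [hv, hW]
    exact Pmain hab K m
  have hco : ((coeffW ℤ A (rhoB v) W : ℤ) : ZMod 2) = 1 := by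
    rw [coeff_rho v hvne W, hgf]
  have hodd : Odd (coeffW ℤ A (rhoB v) W) := by
    rcases Int.even_or_odd (coeffW ℤ A (rhoB v) W) with he | ho
    · exfalso
      have h0 : ((coeffW ℤ A (rhoB v) W : ℤ) : ZMod 2) = 0 := by
        rw [ZMod.intCast_zmod_eq_zero_iff_dvd]
        exact_mod_cast he.two_dvd
      rw [hco] at h0
      exact one_ne_zero h0
    · exact ho
  have hmem : coeffW ℤ A (rhoB v) W
      ∈ Ideal.span {c : ℤ | ∃ P ∈ freeLie ℤ A, coeffW ℤ A P W = c} :=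
    Ideal.subset_span ⟨rhoB v, rhoB_mem' v hvne, rfl⟩
  have hdvd : Submodule.IsPrincipal.generator
      (Ideal.span {c : ℤ | ∃ P ∈ freeLie ℤ A, coeffW ℤ A P W = c}) ∣ coeffW ℤ A (rhoB v) W :=
    (Submodule.IsPrincipal.mem_iff_generator_dvd _).mp hmem
  show Odd (gammaW A W)
  unfold gammaW
  rw [Int.odd_coe_nat, Int.natAbs_odd]
  rcases Int.even_or_odd (Submodule.IsPrincipal.generator
      (Ideal.span {c : ℤ | ∃ P ∈ freeLie ℤ A, coeffW ℤ A P W = c})) with he | ho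
  · exfalso
    have : Even (coeffW ℤ A (rhoB v) W) := by
      obtain ⟨d, hd⟩ := hdvd
      obtain ⟨e, he'⟩ := he
      exact ⟨e * d, by rw [hd, he']; ring⟩
    exact (Int.not_odd_iff_even.mpr this) hodd
  · exact ho
end
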